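/- Let X ∈ ℝ^{n×p}, Y ∈ ℝⁿ, and λ > 0. The zero vector is a global minimizer over ℝ^p of the LASSO objective D ↦ ‖Y − XD‖₂² + λ‖D‖₁ if and only if λ ≥ 2‖XᵀY‖_∞. -/

import Mathlib

open Matrix

/-- property B1 of the LASSO regularization path, exact constant: the zero
vector is a global minimizer of the LASSO objective `D ↦ ‖Y − XD‖₂² + λ‖D‖₁` over `ℝ^p`
if and only if `λ ≥ 2‖XᵀY‖_∞`.  Here `‖XᵀY‖_∞` is the supremum norm of the vector `XᵀY`
(the `norm` of the pi type `Fin p → ℝ`). -/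
theorem lasso_zero_minimizer_iff {n p : ℕ}
    (X : Matrix (Fin n) (Fin p) ℝ) (Y : Fin n → ℝ) (lam : ℝ) (hlam : 0 < lam) :
    (∀ D : Fin p → ℝ,
        ∑ i, Y i ^ 2 ≤ ∑ i, (Y i - X.mulVec D i) ^ 2 + lam * ∑ j, |D j|) ↔
      2 * ‖Xᵀ.mulVec Y‖ ≤ lam := by
  set c := Xᵀ.mulVec Y with hc
  have hdot : ∀ D : Fin p → ℝ, ∑ i, Y i * X.mulVec D i = ∑ j, c j * D j := by
    intro D
    simp only [hc, Matrix.mulVec, dotProduct, Matrix.transpose_apply,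
      Finset.sum_mul, Finset.mul_sum]
    rw [Finset.sum_comm]
    refine Finset.sum_congr rfl fun j _ => Finset.sum_congr rfl fun i _ => by ring
  have key : ∀ D : Fin p → ℝ,
      (∑ i, Y i ^ 2 ≤ ∑ i, (Y i - X.mulVec D i) ^ 2 + lam * ∑ j, |D j|) ↔
      2 * ∑ j, c j * D j ≤ ∑ i, (X.mulVec D i)^2 + lam * ∑ j, |D j| := by
    intro D
    have expand : ∑ i, (Y i - X.mulVec D i) ^ 2
        = ∑ i, Y i ^ 2 - 2 * ∑ i, Y i * X.mulVec D i + ∑ i, (X.mulVec D i)^2 := by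
      rw [Finset.mul_sum, ← Finset.sum_sub_distrib, ← Finset.sum_add_distrib]
      refine Finset.sum_congr rfl fun i _ => by ring
    rw [expand, hdot D]
    constructor <;> intro h <;> linarith
  simp only [key]
  constructor
  · intro h
    have habs : ∀ j, 2 * |c j| ≤ lam := by
      intro j
      set s : ℝ := if 0 ≤ c j then 1 else -1 with hs
      have hs2 : s ^ 2 = 1 := by rw [hs]; split <;> norm_num
      have hcs : c j * s = |c j| := by
        rw [hs]; split
        · simpa using (abs_of_nonneg (by assumption)).symm
        · rw [abs_of_neg (by linarith [lt_of_not_ge ‹¬ 0 ≤ c j›])]; ring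
      have habss : |s| = 1 := by rw [hs]; split <;> norm_num
      set K : ℝ := ∑ i, (X i j)^2 with hK
      have hK0 : 0 ≤ K := Finset.sum_nonneg fun i _ => sq_nonneg _
      have main : ∀ t : ℝ, 0 < t → 2 * |c j| ≤ t * K + lam := by
        intro t ht
        have := h (fun k => if k = j then t * s else 0)
        have h1 : ∑ k, c k * (if k = j then t * s else 0) = |c j| * t := by
          simp only [mul_ite, mul_zero, Finset.sum_ite_eq', Finset.mem_univ, if_true]
          rw [← mul_assoc, mul_comm (c j) t, mul_assoc, hcs, mul_comm]
        have h2 : ∑ k, |(if k = j then t * s else 0 : ℝ)| = t := by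
          simp only [apply_ite abs, abs_zero, Finset.sum_ite_eq', Finset.mem_univ, if_true,
            abs_mul, habss, mul_one, abs_of_pos ht]
        have h3 : ∀ i, X.mulVec (fun k => if k = j then t * s else 0) i = X i j * (t * s) := by
          intro i
          simp [Matrix.mulVec, dotProduct, mul_ite, mul_zero]
        have h4 : ∑ i, (X.mulVec (fun k => if k = j then t * s else 0) i)^2 = t^2 * K := by
          rw [hK, Finset.mul_sum]
          refine Finset.sum_congr rfl fun i _ => by
            rw [h3 i, mul_pow, mul_pow, hs2]; ring
        rw [h1, h2, h4] at this
        nlinarith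
      refine le_of_forall_pos_le_add fun ε hε => ?_
      have ht : (0:ℝ) < ε / (K + 1) := div_pos hε (by linarith)
      have := main _ ht
      have hle : ε / (K + 1) * K ≤ ε := by
        rw [div_mul_eq_mul_div, div_le_iff₀ (by linarith)]
        nlinarith
      linarith
    have : ‖c‖ ≤ lam / 2 := by
      rw [pi_norm_le_iff_of_nonneg (by linarith)]
      intro j
      rw [Real.norm_eq_abs]
      linarith [habs j]
    linarith
  · intro hlam2 D
    have hbound : ∑ j, c j * D j ≤ ‖c‖ * ∑ j, |D j| := by
      rw [Finset.mul_sum]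
      refine Finset.sum_le_sum fun j _ => ?_
      calc c j * D j ≤ |c j * D j| := le_abs_self _
        _ = |c j| * |D j| := abs_mul _ _
        _ ≤ ‖c‖ * |D j| := by
            apply mul_le_mul_of_nonneg_right _ (abs_nonneg _)
            simpa [Real.norm_eq_abs] using norm_le_pi_norm c j
    have hD0 : 0 ≤ ∑ j, |D j| := Finset.sum_nonneg fun j _ => abs_nonneg _
    have hsq : 0 ≤ ∑ i, (X.mulVec D i)^2 := Finset.sum_nonneg fun i _ => sq_nonneg _
    nlinarith [hbound]
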